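/- Let n ∈ ℕ and let ω be a uniformly distributed sequence in [0,1]^n. Then there exist a strictly increasing sequence 𝒩 = (N_i)_{i≥1} of positive integers and a monotonically decreasing function v : ℕ → ℝ_+ with v(N) → 0 as N → ∞ such that D_{N_i}(ω) < v(N_i) for all i ∈ ℕ and limsup_{i→∞} N_{i−1} v(N_i) < 1; that is, ω is an (𝒩,v)-discrepancy satisfying sequence. -/

import Mathlib

open MeasureTheory Filter Set Metric
open scoped ENNReal NNReal

noncomputable section

/-- The unit cube `[0,1]^n`. -/
def cube (n : ℕ) : Set (Fin n → ℝ) := Set.univ.pi fun _ => Set.Icc (0 : ℝ) 1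

/-- `W_ω(Ψ)`: points of `[0,1]^n` that are coordinate-wise `ψᵢ`-approximable by the
sequence `ω` for infinitely many indices `j`. -/
def WSet (n : ℕ) (ω : ℕ → Fin n → ℝ) (Ψ : Fin n → ℕ → ℝ) : Set (Fin n → ℝ) :=
  {x | x ∈ cube n ∧ ∃ᶠ j in Filter.atTop, ∀ i, |x i - ω j i| < Ψ i j}

/-- Rectangles `∏ [aᵢ, bᵢ) ⊆ [0,1]^n` with `aᵢ < bᵢ`. -/
def IsRect (n : ℕ) (R : Set (Fin n → ℝ)) : Prop :=
  ∃ a b : Fin n → ℝ, (∀ i, 0 ≤ a i ∧ a i < b i ∧ b i ≤ 1) ∧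
    R = Set.univ.pi fun i => Set.Ico (a i) (b i)

open Classical in
/-- `A(R; N, ω)`: the number of indices `1 ≤ j ≤ N` with `ω j ∈ R`. -/
def countIn {n : ℕ} (ω : ℕ → Fin n → ℝ) (R : Set (Fin n → ℝ)) (N : ℕ) : ℕ :=
  ((Finset.Icc 1 N).filter fun j => ω j ∈ R).card

/-- The discrepancy `D_N(ω)` of the sequence `ω`. -/
def Disc (n : ℕ) (ω : ℕ → Fin n → ℝ) (N : ℕ) : ℝ :=
  sSup {d | ∃ R, IsRect n R ∧ d = |(countIn ω R N : ℝ) / N - (volume R).toReal|}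

/-- `ω` is an `(𝒩, v)`-discrepancy satisfying sequence. -/
def IsDSS (n : ℕ) (ω : ℕ → Fin n → ℝ) (Nseq : ℕ → ℕ) (v : ℕ → ℝ) : Prop :=
  StrictMono Nseq ∧ (∀ k, 0 < Nseq k) ∧ (∀ N, 0 < v N) ∧ Antitone v ∧
    Filter.Tendsto v Filter.atTop (nhds 0) ∧
    (∀ k, Disc n ω (Nseq k) < v (Nseq k)) ∧
    Filter.limsup (fun k => (Nseq k : ℝ) * v (Nseq (k + 1))) Filter.atTop < 1

/-- `f` is `c`-regular with respect to the sequence `Nseq`. -/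
def CRegular (f : ℕ → ℝ) (Nseq : ℕ → ℕ) (c : ℝ) : Prop :=
  ∀ᶠ k in Filter.atTop, f (Nseq (k + 1)) ≤ c * f (Nseq k)

/-- `Δ(x, r)`: product of the intervals of radius `rᵢ` about `xᵢ`, intersected with `[0,1]`. -/
def Delta (n : ℕ) (x r : Fin n → ℝ) : Set (Fin n → ℝ) :=
  Set.univ.pi fun i => Metric.ball (x i) (r i) ∩ Set.Icc 0 1


/-- `ω` is uniformly distributed on `[0,1]^n`. -/
def IsUD (n : ℕ) (ω : ℕ → Fin n → ℝ) : Prop :=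
  ∀ R : Set (Fin n → ℝ), IsRect n R →
    Filter.Tendsto (fun N => (countIn ω R N : ℝ) / N) Filter.atTop
      (nhds (volume R).toReal)

/-- Every uniformly distributed sequence is an `(𝒩,v)`-discrepancy satisfying
sequence for a suitable choice of `𝒩` and `v`. -/
lemma prod_sub_prod_le {ι : Type*} (s : Finset ι) (l r : ι → ℝ)
    (h0 : ∀ i ∈ s, 0 ≤ l i) (hlr : ∀ i ∈ s, l i ≤ r i) (hr1 : ∀ i ∈ s, r i ≤ 1) :
    ∏ i ∈ s, r i - ∏ i ∈ s, l i ≤ ∑ i ∈ s, (r i - l i) := by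
  classical
  induction s using Finset.induction_on with
  | empty => simp
  | @insert a s ha ih =>
    have h0' : ∀ i ∈ s, 0 ≤ l i := fun i hi => h0 i (Finset.mem_insert_of_mem hi)
    have hlr' : ∀ i ∈ s, l i ≤ r i := fun i hi => hlr i (Finset.mem_insert_of_mem hi)
    have hr1' : ∀ i ∈ s, r i ≤ 1 := fun i hi => hr1 i (Finset.mem_insert_of_mem hi)
    have ihh := ih h0' hlr' hr1'
    have hB0 : 0 ≤ ∏ i ∈ s, l i := Finset.prod_nonneg h0'
    have hBA : ∏ i ∈ s, l i ≤ ∏ i ∈ s, r i :=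
      Finset.prod_le_prod h0' hlr'
    have hA1 : ∏ i ∈ s, r i ≤ 1 :=
      Finset.prod_le_one (fun i hi => le_trans (h0' i hi) (hlr' i hi)) hr1'
    have hB1 : ∏ i ∈ s, l i ≤ 1 := le_trans hBA hA1
    have h0a := h0 a (Finset.mem_insert_self a s)
    have hlra := hlr a (Finset.mem_insert_self a s)
    have hr1a := hr1 a (Finset.mem_insert_self a s)
    rw [Finset.prod_insert ha, Finset.prod_insert ha, Finset.sum_insert ha]
    nlinarith [mul_nonneg (sub_nonneg.2 hr1a) (sub_nonneg.2 hBA),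
      mul_nonneg (sub_nonneg.2 hlra) (sub_nonneg.2 hB1)]

lemma vol_pi_Ico {n : ℕ} (a b : Fin n → ℝ) :
    (volume (Set.univ.pi fun i => Set.Ico (a i) (b i))).toReal = ∏ i, max (b i - a i) 0 := by
  rw [volume_pi_pi]
  rw [ENNReal.toReal_prod]
  refine Finset.prod_congr rfl fun i _ => ?_
  rw [Real.volume_Ico, ENNReal.toReal_ofReal']

lemma countIn_mono {n : ℕ} (ω : ℕ → Fin n → ℝ) {R R' : Set (Fin n → ℝ)} (h : R ⊆ R') (N : ℕ) :
    countIn ω R N ≤ countIn ω R' N := by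
  classical
  unfold countIn
  apply Finset.card_le_card
  intro j hj
  rw [Finset.mem_filter] at *
  exact ⟨hj.1, h hj.2⟩

lemma countIn_le {n : ℕ} (ω : ℕ → Fin n → ℝ) (R : Set (Fin n → ℝ)) (N : ℕ) :
    countIn ω R N ≤ N := by
  classical
  refine le_trans (Finset.card_filter_le _ _) ?_
  simp [Nat.card_Icc]

def gridRect (n m : ℕ) (p q : Fin n → Fin (m+1)) : Set (Fin n → ℝ) :=
  Set.univ.pi fun i => Set.Ico ((p i : ℝ)/m) ((q i : ℝ)/m)

lemma grid_eventually {n : ℕ} (ω : ℕ → Fin n → ℝ) (hud : IsUD n ω) {m : ℕ} (hm : 0 < m)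
    {ε : ℝ} (hε : 0 < ε) (p q : Fin n → Fin (m+1)) :
    ∀ᶠ N in Filter.atTop,
      |(countIn ω (gridRect n m p q) N : ℝ) / N - (volume (gridRect n m p q)).toReal| ≤ ε := by
  have hm' : (0:ℝ) < m := by exact_mod_cast hm
  by_cases h : ∀ i, (p i : ℕ) < (q i : ℕ)
  · have hR : IsRect n (gridRect n m p q) := by
      refine ⟨fun i => (p i : ℝ)/m, fun i => (q i : ℝ)/m, fun i => ⟨?_, ?_, ?_⟩, rfl⟩
      · positivity
      · apply (div_lt_div_iff_of_pos_right hm').mpr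
        exact_mod_cast h i
      · rw [div_le_one hm']
        exact_mod_cast (q i).is_le
    have := (hud _ hR).eventually (Metric.closedBall_mem_nhds _ (show 0 < ε from hε))
    filter_upwards [this] with N hN
    simpa [Real.dist_eq] using hN
  · push_neg at h
    obtain ⟨i, hi⟩ := h
    have hempty : gridRect n m p q = ∅ := by
      apply Set.univ_pi_eq_empty (i := i)
      rw [Set.Ico_eq_empty]
      rw [not_lt]
      apply (div_le_div_iff_of_pos_right hm').mpr
      exact_mod_cast hi
    rw [hempty]
    refine Filter.Eventually.of_forall fun N => ?_
    simp [countIn, hε.le]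

lemma disc_eventually_lt {n : ℕ} (ω : ℕ → Fin n → ℝ) (hud : IsUD n ω) {ε : ℝ} (hε : 0 < ε) :
    ∀ᶠ N in Filter.atTop, Disc n ω N < ε := by
  obtain ⟨m, hm⟩ := exists_nat_gt (8 * n / ε)
  have hm0 : 0 < m := by
    have h8 : (0:ℝ) < m := lt_of_le_of_lt (by positivity) hm
    exact_mod_cast h8
  have hm' : (0:ℝ) < m := by exact_mod_cast hm0
  have h2n : 2 * (n:ℝ) / m ≤ ε / 4 := by
    rw [div_le_div_iff₀ hm' (by norm_num)]
    rw [div_lt_iff₀ hε] at hm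
    linarith
  have hall : ∀ᶠ N in Filter.atTop, ∀ p q : Fin n → Fin (m+1),
      |(countIn ω (gridRect n m p q) N : ℝ) / N - (volume (gridRect n m p q)).toReal| ≤ ε/4 :=
    Filter.eventually_all.2 fun p => Filter.eventually_all.2 fun q =>
      grid_eventually ω hud hm0 (by positivity) p q
  filter_upwards [hall, Filter.eventually_ge_atTop 1] with N hN hN1
  have hN' : (0:ℝ) < N := by exact_mod_cast hN1
  have hle : Disc n ω N ≤ ε/2 := by
    apply Real.sSup_le ?_ (by positivity)
    rintro d ⟨R, ⟨a, b, hab, rfl⟩, rfl⟩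
    -- coordinates
    have ha0 : ∀ i, 0 ≤ a i := fun i => (hab i).1
    have haltb : ∀ i, a i < b i := fun i => (hab i).2.1
    have hb1 : ∀ i, b i ≤ 1 := fun i => (hab i).2.2
    have ha1 : ∀ i, a i ≤ 1 := fun i => le_of_lt ((haltb i).trans_le (hb1 i))
    have hb0 : ∀ i, 0 ≤ b i := fun i => le_of_lt (lt_of_le_of_lt (ha0 i) (haltb i))
    have ham : ∀ i, a i * m ≤ m := fun i => by nlinarith [ha1 i]
    have hbm : ∀ i, b i * m ≤ m := fun i => by nlinarith [hb1 i]
    have ham0 : ∀ i, 0 ≤ a i * m := fun i => mul_nonneg (ha0 i) hm'.le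
    have hbm0 : ∀ i, 0 ≤ b i * m := fun i => mul_nonneg (hb0 i) hm'.le
    set pU : Fin n → Fin (m+1) := fun i =>
      ⟨⌊a i * m⌋₊, Nat.lt_succ_of_le (by
        have := Nat.floor_le_floor (R := ℝ) (ham i)
        simpa using this)⟩ with hpU
    set qU : Fin n → Fin (m+1) := fun i =>
      ⟨⌈b i * m⌉₊, Nat.lt_succ_of_le (Nat.ceil_le.2 (by exact_mod_cast hbm i))⟩ with hqU
    set pL : Fin n → Fin (m+1) := fun i =>
      ⟨⌈a i * m⌉₊, Nat.lt_succ_of_le (Nat.ceil_le.2 (by exact_mod_cast ham i))⟩ with hpL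
    set qL : Fin n → Fin (m+1) := fun i =>
      ⟨⌊b i * m⌋₊, Nat.lt_succ_of_le (by
        have := Nat.floor_le_floor (R := ℝ) (hbm i)
        simpa using this)⟩ with hqL
    -- real inequalities per coordinate
    have hfU1 : ∀ i, ((pU i : ℕ) : ℝ)/m ≤ a i := fun i => by
      rw [div_le_iff₀ hm']
      exact Nat.floor_le (ham0 i)
    have hfU1' : ∀ i, a i - 1/m ≤ ((pU i : ℕ) : ℝ)/m := fun i => by
      rw [sub_le_iff_le_add, ← add_div, le_div_iff₀ hm']
      exact le_of_lt (Nat.lt_floor_add_one _)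
    have hfU2 : ∀ i, b i ≤ ((qU i : ℕ) : ℝ)/m := fun i => by
      rw [le_div_iff₀ hm']
      exact Nat.le_ceil _
    have hfU2' : ∀ i, ((qU i : ℕ) : ℝ)/m ≤ b i + 1/m := fun i => by
      rw [div_le_iff₀ hm']
      calc ((⌈b i * m⌉₊ : ℕ) : ℝ) ≤ b i * m + 1 := le_of_lt (Nat.ceil_lt_add_one (hbm0 i))
        _ = (b i + 1/m) * m := by field_simp
    have hfL1 : ∀ i, a i ≤ ((pL i : ℕ) : ℝ)/m := fun i => by
      rw [le_div_iff₀ hm']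
      exact Nat.le_ceil _
    have hfL1' : ∀ i, ((pL i : ℕ) : ℝ)/m ≤ a i + 1/m := fun i => by
      rw [div_le_iff₀ hm']
      calc ((⌈a i * m⌉₊ : ℕ) : ℝ) ≤ a i * m + 1 := le_of_lt (Nat.ceil_lt_add_one (ham0 i))
        _ = (a i + 1/m) * m := by field_simp
    have hfL2 : ∀ i, ((qL i : ℕ) : ℝ)/m ≤ b i := fun i => by
      rw [div_le_iff₀ hm']
      exact Nat.floor_le (hbm0 i)
    have hfL2' : ∀ i, b i - 1/m ≤ ((qL i : ℕ) : ℝ)/m := fun i => by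
      rw [sub_le_iff_le_add, ← add_div, le_div_iff₀ hm']
      exact le_of_lt (Nat.lt_floor_add_one _)
    -- inclusions
    have hRU : (Set.univ.pi fun i => Set.Ico (a i) (b i)) ⊆ gridRect n m pU qU := by
      apply Set.pi_mono
      intro i _
      exact Set.Ico_subset_Ico (hfU1 i) (hfU2 i)
    have hLR : gridRect n m pL qL ⊆ (Set.univ.pi fun i => Set.Ico (a i) (b i)) := by
      apply Set.pi_mono
      intro i _
      exact Set.Ico_subset_Ico (hfL1 i) (hfL2 i)
    -- volumes
    have hvolR : (volume (Set.univ.pi fun i => Set.Ico (a i) (b i))).toReal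
        = ∏ i, (b i - a i) := by
      rw [vol_pi_Ico]
      exact Finset.prod_congr rfl fun i _ => max_eq_left (by linarith [haltb i])
    have hvolU : (volume (gridRect n m pU qU)).toReal
        = ∏ i, (((qU i : ℕ) : ℝ)/m - ((pU i : ℕ) : ℝ)/m) := by
      rw [gridRect, vol_pi_Ico]
      exact Finset.prod_congr rfl fun i _ =>
        max_eq_left (by linarith [hfU1 i, hfU2 i, haltb i])
    have hvolL : (volume (gridRect n m pL qL)).toReal
        = ∏ i, max (((qL i : ℕ) : ℝ)/m - ((pL i : ℕ) : ℝ)/m) 0 := by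
      rw [gridRect, vol_pi_Ico]
    -- volume comparisons
    have hUR : (volume (gridRect n m pU qU)).toReal
        ≤ (volume (Set.univ.pi fun i => Set.Ico (a i) (b i))).toReal + 2 * n / m := by
      rw [hvolU, hvolR]
      have key := prod_sub_prod_le Finset.univ (fun i => b i - a i)
        (fun i => ((qU i : ℕ) : ℝ)/m - ((pU i : ℕ) : ℝ)/m)
        (fun i _ => by linarith [haltb i])
        (fun i _ => by linarith [hfU1 i, hfU2 i])
        (fun i _ => by
          have h1 : (0:ℝ) ≤ ((pU i : ℕ) : ℝ)/m := by positivity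
          have h2 : ((qU i : ℕ) : ℝ)/m ≤ 1 := by
            rw [div_le_one hm']; exact_mod_cast (qU i).is_le
          linarith)
      beta_reduce at key
      have hsum : ∑ i : Fin n, ((((qU i : ℕ) : ℝ)/m - ((pU i : ℕ) : ℝ)/m) - (b i - a i))
          ≤ (n:ℝ) * (2/m) := by
        have he : ∑ _i : Fin n, 2/(m:ℝ) = (n:ℝ) * (2/m) := by simp
        rw [← he]
        apply Finset.sum_le_sum
        intro i _
        have h1 := hfU1' i
        have h2 := hfU2' i
        have h3 : (2:ℝ)/m = 1/m + 1/m := by ring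
        linarith
      have hnm : (n:ℝ) * (2/m) = 2 * n / m := by ring
      linarith [key, hsum]
    have hRL : (volume (Set.univ.pi fun i => Set.Ico (a i) (b i))).toReal
        ≤ (volume (gridRect n m pL qL)).toReal + 2 * n / m := by
      rw [hvolL, hvolR]
      have key := prod_sub_prod_le Finset.univ
        (fun i => max (((qL i : ℕ) : ℝ)/m - ((pL i : ℕ) : ℝ)/m) 0)
        (fun i => b i - a i)
        (fun i _ => le_max_right _ _)
        (fun i _ => by exact max_le (by linarith [hfL1 i, hfL2 i]) (by linarith [haltb i]))
        (fun i _ => by linarith [hb1 i, ha0 i])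
      beta_reduce at key
      have hsum : ∑ i : Fin n, ((b i - a i) - max (((qL i : ℕ) : ℝ)/m - ((pL i : ℕ) : ℝ)/m) 0)
          ≤ (n:ℝ) * (2/m) := by
        have he : ∑ _i : Fin n, 2/(m:ℝ) = (n:ℝ) * (2/m) := by simp
        rw [← he]
        apply Finset.sum_le_sum
        intro i _
        have h1 := hfL1' i
        have h2 := hfL2' i
        have h3 : (2:ℝ)/m = 1/m + 1/m := by ring
        have h4 : ((qL i : ℕ) : ℝ)/m - ((pL i : ℕ) : ℝ)/m
            ≤ max (((qL i : ℕ) : ℝ)/m - ((pL i : ℕ) : ℝ)/m) 0 := le_max_left _ _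
        linarith
      have hnm : (n:ℝ) * (2/m) = 2 * n / m := by ring
      linarith [key, hsum]
    -- count comparisons
    have hcRU : (countIn ω (Set.univ.pi fun i => Set.Ico (a i) (b i)) N : ℝ) / N
        ≤ (countIn ω (gridRect n m pU qU) N : ℝ) / N := by
      gcongr
      exact_mod_cast countIn_mono ω hRU N
    have hcLR : (countIn ω (gridRect n m pL qL) N : ℝ) / N
        ≤ (countIn ω (Set.univ.pi fun i => Set.Ico (a i) (b i)) N : ℝ) / N := by
      gcongr
      exact_mod_cast countIn_mono ω hLR N
    have hU := abs_le.1 (hN pU qU)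
    have hL := abs_le.1 (hN pL qL)
    rw [abs_le]
    constructor
    · linarith [hcLR, hL.1, hRL, h2n]
    · linarith [hcRU, hU.2, hUR, h2n]
  linarith [hε]

theorem stmt_15 (n : ℕ) (ω : ℕ → Fin n → ℝ) (hω : ∀ j, ω j ∈ cube n)
    (hud : IsUD n ω) :
    ∃ (Nseq : ℕ → ℕ) (v : ℕ → ℝ), IsDSS n ω Nseq v := by
  have key : ∀ ε : ℝ, ∃ M : ℕ, ∀ K, M ≤ K → 0 < ε → Disc n ω K < ε := by
    intro ε
    by_cases hε : 0 < ε
    · obtain ⟨M, hM⟩ := Filter.eventually_atTop.1 (disc_eventually_lt ω hud hε)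
      exact ⟨M, fun K hK _ => hM K hK⟩
    · exact ⟨0, fun K _ h => absurd h hε⟩
  choose M hM using key
  -- recursive construction of (N_k, u_k)
  set g : ℕ → ℕ × ℝ := fun k => Nat.rec (motive := fun _ => ℕ × ℝ)
      (max 1 (M (1/2)), 1/2)
      (fun _ p => (max (p.1 + 1) (M (min (p.2/2) (1/(2*p.1)))),
        min (p.2/2) (1/(2*p.1)))) k with hg
  set Ns : ℕ → ℕ := fun k => (g k).1 with hNs
  set u : ℕ → ℝ := fun k => (g k).2 with hu
  have hg0 : g 0 = (max 1 (M (1/2)), 1/2) := rfl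
  have hgs : ∀ k, g (k+1) = (max (Ns k + 1) (M (min (u k/2) (1/(2*(Ns k:ℝ))))),
      min (u k/2) (1/(2*(Ns k:ℝ)))) := fun k => rfl
  -- basic invariants
  have inv : ∀ k, 1 ≤ Ns k ∧ 0 < u k ∧ Disc n ω (Ns k) < u k := by
    intro k
    induction k with
    | zero =>
      have hu0 : u 0 = 1/2 := rfl
      have hN0 : Ns 0 = max 1 (M (1/2)) := rfl
      refine ⟨by rw [hN0]; exact le_max_left _ _, by rw [hu0]; norm_num, ?_⟩
      rw [hu0]
      exact hM (1/2) (Ns 0) (by rw [hN0]; exact le_max_right _ _) (by norm_num)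
    | succ k ih =>
      obtain ⟨h1, h2, _⟩ := ih
      have hupos : 0 < min (u k/2) (1/(2*(Ns k:ℝ))) := by
        apply lt_min (by linarith)
        have : (0:ℝ) < Ns k := by exact_mod_cast h1
        positivity
      have hNsucc : Ns (k+1) = max (Ns k + 1) (M (min (u k/2) (1/(2*(Ns k:ℝ))))) := rfl
      have husucc : u (k+1) = min (u k/2) (1/(2*(Ns k:ℝ))) := rfl
      refine ⟨?_, ?_, ?_⟩
      · rw [hNsucc]; omega
      · rw [husucc]; exact hupos
      · rw [husucc]
        apply hM _ _ ?_ hupos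
        rw [hNsucc]; exact le_max_right _ _
  have hN1 : ∀ k, 1 ≤ Ns k := fun k => (inv k).1
  have hNpos : ∀ k, 0 < Ns k := fun k => (inv k).1
  have hupos : ∀ k, 0 < u k := fun k => (inv k).2.1
  have hNR : ∀ k, (0:ℝ) < Ns k := fun k => by exact_mod_cast hNpos k
  have husucc : ∀ k, u (k+1) = min (u k/2) (1/(2*(Ns k:ℝ))) := fun k => rfl
  have hNsucc : ∀ k, Ns (k+1) = max (Ns k + 1) (M (u (k+1))) := fun k => rfl
  have hstep : ∀ k, Ns k < Ns (k+1) := fun k => by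
    rw [hNsucc k]; omega
  have hSM : StrictMono Ns := strictMono_nat_of_lt_succ hstep
  have huhalf : ∀ k, u (k+1) ≤ u k / 2 := fun k => by
    rw [husucc k]; exact min_le_left _ _
  have huanti : Antitone u := antitone_nat_of_succ_le fun k => by
    have := huhalf k; have := hupos k; linarith
  have hubound : ∀ k, u k ≤ (1/2:ℝ)^k := by
    intro k
    induction k with
    | zero =>
      have hu0 : u 0 = 1/2 := rfl
      rw [hu0]; norm_num
    | succ k ih =>
      have := huhalf k
      have : u (k+1) ≤ (1/2:ℝ)^k / 2 := by linarith
      calc u (k+1) ≤ (1/2:ℝ)^k / 2 := this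
        _ = (1/2:ℝ)^(k+1) := by ring
  have huN : ∀ k, u (k+1) ≤ 1/(2*(Ns k:ℝ)) := fun k => by
    rw [husucc k]; exact min_le_right _ _
  -- define v
  classical
  set K : ℕ → ℕ := fun N => Nat.findGreatest (fun k => Ns k ≤ N) N with hK
  set v : ℕ → ℝ := fun N => u (K N) with hv
  have hKmono : Monotone K := fun N N' h =>
    Nat.findGreatest_mono (fun k hk => le_trans hk h) h
  have hKge : ∀ k N, Ns k ≤ N → k ≤ K N := fun k N h =>
    Nat.le_findGreatest (le_trans (hSM.le_apply) h) h
  have hKNs : ∀ k, K (Ns k) = k := by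
    intro k
    apply le_antisymm
    · by_contra hcon
      push_neg at hcon
      have hfg : Ns (K (Ns k)) ≤ Ns k :=
        Nat.findGreatest_spec (P := fun j => Ns j ≤ Ns k) (m := k) hSM.le_apply le_rfl
      exact absurd (hSM.le_iff_le.1 hfg) (not_le.2 hcon)
    · exact hKge k (Ns k) le_rfl
  have hKtop : Filter.Tendsto K Filter.atTop Filter.atTop := by
    apply Filter.tendsto_atTop.2
    intro k
    filter_upwards [Filter.eventually_ge_atTop (Ns k)] with N hN
    exact hKge k N hN
  refine ⟨Ns, v, hSM, hNpos, fun N => hupos _, ?_, ?_, ?_, ?_⟩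
  · intro N N' h
    exact huanti (hKmono h)
  · apply squeeze_zero (fun N => (hupos (K N)).le) (fun N => hubound (K N))
    exact (tendsto_pow_atTop_nhds_zero_of_lt_one (by norm_num) (by norm_num)).comp hKtop
  · intro k
    have : v (Ns k) = u k := by show u (K (Ns k)) = u k; rw [hKNs k]
    rw [this]
    exact (inv k).2.2
  · have hhalf : ∀ k, (Ns k : ℝ) * v (Ns (k+1)) ≤ 1/2 := by
      intro k
      have hvv : v (Ns (k+1)) = u (k+1) := by
        show u (K (Ns (k+1))) = u (k+1); rw [hKNs (k+1)]
      rw [hvv]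
      have h1 := huN k
      have h2 : (Ns k : ℝ) * u (k+1) ≤ (Ns k : ℝ) * (1/(2*(Ns k:ℝ))) :=
        mul_le_mul_of_nonneg_left h1 (hNR k).le
      have h3 : (Ns k : ℝ) * (1/(2*(Ns k:ℝ))) = 1/2 := by
        rw [mul_one_div, div_eq_div_iff (by have := hNR k; positivity) (by norm_num)]
        ring
      linarith
    have hcb : Filter.IsCoboundedUnder (· ≤ ·) Filter.atTop
        (fun k => (Ns k : ℝ) * v (Ns (k+1))) :=
      Filter.isCoboundedUnder_le_of_le Filter.atTop
        (x := 0) (fun k => mul_nonneg (Nat.cast_nonneg _) (hupos _).le)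
    calc Filter.limsup (fun k => (Ns k : ℝ) * v (Ns (k+1))) Filter.atTop
        ≤ 1/2 := Filter.limsup_le_of_le hcb (Filter.Eventually.of_forall hhalf)
      _ < 1 := by norm_num
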